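/- Let (P_θ)_{θ∈Θ} be a statistical model on a sample space Ω and let κ ∈ (0,1). (a) If f : Ω × Θ → [0,1] is a conditional p-function w.r.t. the model, then (ω,θ) ↦ κ·f(ω;θ)^{κ−1} (with 0^{κ−1} = ∞) is a conditional e-function w.r.t. the model, i.e. ∫ κ·f(ω;θ)^{κ−1} P_θ(dω) ≤ 1 for every θ ∈ Θ. (b) If f : Ω × Θ → [0,∞] is a conditional e-function w.r.t. the model, then (ω,θ) ↦ min(1, 1/f(ω;θ)) is a conditional p-function w.r.t. the model, i.e. P_θ{ω : min(1, 1/f(ω;θ)) ≤ ε} ≤ ε for every θ ∈ Θ and every ε > 0. -/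

import Mathlib

open MeasureTheory ProbabilityTheory Set
open scoped ENNReal

private lemma meas_rpow (r : ℝ) : Measurable fun t : ℝ => t ^ r :=
  measurable_id.pow_const r

private lemma not_mem_uIcc_of_pos {y : ℝ} (hy : 0 < y) : (0 : ℝ) ∉ Set.uIcc y 1 := by
  intro h0
  rcases Set.mem_uIcc.mp h0 with h | h
  · linarith [h.1]
  · linarith [h.1]

/-- lintegral of `t ^ r` over `Ioc y 1` for `0 < y ≤ 1`, `r ≠ -1`. -/
private lemma lint_rpow_Ioc {y r : ℝ} (hy : 0 < y) (hy1 : y ≤ 1) (hr : r ≠ -1) :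
    ∫⁻ t in Set.Ioc y 1, ENNReal.ofReal (t ^ r) =
      ENNReal.ofReal ((1 - y ^ (r + 1)) / (r + 1)) := by
  have hInt : IntegrableOn (fun t : ℝ => t ^ r) (Set.Ioc y 1) volume := by
    have := intervalIntegral.intervalIntegrable_rpow (μ := volume) (r := r) (a := y) (b := 1)
      (Or.inr (not_mem_uIcc_of_pos hy))
    rwa [intervalIntegrable_iff_integrableOn_Ioc_of_le hy1] at this
  rw [← ofReal_integral_eq_lintegral_ofReal hInt]
  · congr 1
    rw [← intervalIntegral.integral_of_le hy1,
      integral_rpow (Or.inr ⟨hr, not_mem_uIcc_of_pos hy⟩), Real.one_rpow]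
  · filter_upwards [ae_restrict_mem measurableSet_Ioc] with t ht
    exact Real.rpow_nonneg (hy.trans ht.1).le r

/-- lintegral of `t ^ r` over `Ioc 0 1` for `-1 < r`. -/
private lemma lint_rpow_Ioc_zero {r : ℝ} (hr : -1 < r) :
    ∫⁻ t in Set.Ioc (0 : ℝ) 1, ENNReal.ofReal (t ^ r) = ENNReal.ofReal (1 / (r + 1)) := by
  have hInt : IntegrableOn (fun t : ℝ => t ^ r) (Set.Ioc (0 : ℝ) 1) volume := by
    have := intervalIntegral.intervalIntegrable_rpow' (a := (0 : ℝ)) (b := 1) hr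
    rwa [intervalIntegrable_iff_integrableOn_Ioc_of_le zero_le_one] at this
  rw [← ofReal_integral_eq_lintegral_ofReal hInt]
  · congr 1
    rw [← intervalIntegral.integral_of_le zero_le_one, integral_rpow (Or.inl hr),
      Real.one_rpow, Real.zero_rpow (by linarith), sub_zero]
  · filter_upwards [ae_restrict_mem measurableSet_Ioc] with t ht
    exact Real.rpow_nonneg ht.1.le r

/-- lintegral of `t ^ r` over `Ioc 0 1` for `r < -1` is infinite. -/
private lemma lint_rpow_Ioc_top {r : ℝ} (hr : r < -1) :
    ∫⁻ t in Set.Ioc (0 : ℝ) 1, ENNReal.ofReal (t ^ r) = ∞ := by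
  by_contra h
  have hfin : HasFiniteIntegral (fun t : ℝ => t ^ r) (volume.restrict (Set.Ioc (0 : ℝ) 1)) := by
    rw [hasFiniteIntegral_iff_ofReal]
    · exact lt_top_iff_ne_top.mpr h
    · filter_upwards [ae_restrict_mem measurableSet_Ioc] with t ht
      exact Real.rpow_nonneg ht.1.le r
  have hInt : IntegrableOn (fun t : ℝ => t ^ r) (Set.Ioc (0 : ℝ) 1) volume :=
    ⟨(meas_rpow r).aestronglyMeasurable, hfin⟩
  have : IntegrableOn (fun t : ℝ => t ^ r) (Set.Ioo (0 : ℝ) 1) volume :=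
    hInt.mono_set Set.Ioo_subset_Ioc_self
  rw [intervalIntegral.integrableOn_Ioo_rpow_iff zero_lt_one] at this
  linarith

/-- The key pointwise identity. -/
private lemma key_pointwise {κ : ℝ} (hκ : κ ∈ Set.Ioo (0 : ℝ) 1) {x : ℝ≥0∞} (hx : x ≤ 1) :
    ENNReal.ofReal κ * x ^ (κ - 1) =
      ENNReal.ofReal κ + ∫⁻ t in Set.Ioc (0 : ℝ) 1,
        (if x ≤ ENNReal.ofReal t then ENNReal.ofReal (κ * (1 - κ) * t ^ (κ - 2)) else 0) := by
  obtain ⟨hκ0, hκ1⟩ := hκ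
  have hc : 0 < κ * (1 - κ) := by nlinarith
  rcases eq_or_lt_of_le (zero_le : (0 : ℝ≥0∞) ≤ x) with hx0 | hx0
  · -- x = 0 : both sides are ∞
    rw [← hx0]
    have h1 : (0 : ℝ≥0∞) ^ (κ - 1) = ∞ := ENNReal.zero_rpow_of_neg (by linarith)
    rw [h1, ENNReal.mul_top (by simp [hκ0, ENNReal.ofReal_eq_zero, not_le])]
    have h2 : ∫⁻ t in Set.Ioc (0 : ℝ) 1,
        (if (0 : ℝ≥0∞) ≤ ENNReal.ofReal t then ENNReal.ofReal (κ * (1 - κ) * t ^ (κ - 2)) else 0)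
        = ∞ := by
      have : ∀ t : ℝ, (if (0 : ℝ≥0∞) ≤ ENNReal.ofReal t then
          ENNReal.ofReal (κ * (1 - κ) * t ^ (κ - 2)) else 0)
          = ENNReal.ofReal (κ * (1 - κ)) * ENNReal.ofReal (t ^ (κ - 2)) := by
        intro t
        rw [if_pos zero_le, ENNReal.ofReal_mul hc.le]
      simp_rw [this]
      rw [lintegral_const_mul _ ((meas_rpow _).ennreal_ofReal),
        lint_rpow_Ioc_top (by linarith)]
      exact ENNReal.mul_top (by simp [hc, ENNReal.ofReal_eq_zero, not_le])
    rw [h2]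
    simp
  · -- 0 < x ≤ 1
    have hxt : x ≠ ∞ := (hx.trans_lt ENNReal.one_lt_top).ne
    set y := x.toReal with hy_def
    have hy0 : 0 < y := ENNReal.toReal_pos hx0.ne' hxt
    have hy1 : y ≤ 1 := by
      rw [hy_def, ← ENNReal.toReal_one]
      exact ENNReal.toReal_mono ENNReal.one_ne_top hx
    have hxy : x = ENNReal.ofReal y := (ENNReal.ofReal_toReal hxt).symm
    -- the if-function equals an indicator of Ici y
    have hind : (fun t : ℝ => if x ≤ ENNReal.ofReal t then
        ENNReal.ofReal (κ * (1 - κ) * t ^ (κ - 2)) else 0)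
        = Set.indicator (Set.Ici y) (fun t => ENNReal.ofReal (κ * (1 - κ) * t ^ (κ - 2))) := by
      funext t
      rw [Set.indicator_apply]
      congr 1
      simp only [eq_iff_iff, Set.mem_Ici]
      constructor
      · intro h
        by_contra hlt
        push_neg at hlt
        rcases le_or_gt t 0 with ht0 | ht0
        · rw [ENNReal.ofReal_eq_zero.mpr ht0] at h
          exact absurd (le_antisymm h (zero_le : (0 : ℝ≥0∞) ≤ x)) hx0.ne'
        · exact absurd ((ENNReal.le_ofReal_iff_toReal_le hxt ht0.le).mp h) (not_le.mpr hlt)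
      · intro h
        exact (ENNReal.le_ofReal_iff_toReal_le hxt (hy0.le.trans h)).mpr h
    rw [hind, lintegral_indicator measurableSet_Ici,
      Measure.restrict_restrict measurableSet_Ici]
    have hset : Set.Ici y ∩ Set.Ioc (0 : ℝ) 1 = Set.Icc y 1 := by
      ext t
      simp only [Set.mem_inter_iff, Set.mem_Ici, Set.mem_Ioc, Set.mem_Icc]
      constructor
      · rintro ⟨h1, _, h3⟩; exact ⟨h1, h3⟩
      · rintro ⟨h1, h2⟩; exact ⟨h1, hy0.trans_le h1, h2⟩
    rw [hset, ← Measure.restrict_congr_set Ioc_ae_eq_Icc]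
    have heq : ∀ t : ℝ, ENNReal.ofReal (κ * (1 - κ) * t ^ (κ - 2))
        = ENNReal.ofReal (κ * (1 - κ)) * ENNReal.ofReal (t ^ (κ - 2)) := fun t => by
      rw [ENNReal.ofReal_mul hc.le]
    simp_rw [heq]
    rw [lintegral_const_mul _ ((meas_rpow _).ennreal_ofReal),
      lint_rpow_Ioc hy0 hy1 (by intro h; linarith)]
    have harith : (κ - 2) + 1 = κ - 1 := by ring
    rw [harith, ← ENNReal.ofReal_mul hc.le]
    have hle1 : 1 ≤ y ^ (κ - 1) :=
      Real.one_le_rpow_of_pos_of_le_one_of_nonpos hy0 hy1 (by linarith)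
    have hval : κ * (1 - κ) * ((1 - y ^ (κ - 1)) / (κ - 1)) = κ * y ^ (κ - 1) - κ := by
      have hκn : κ - 1 ≠ 0 := by linarith
      field_simp
      ring
    rw [hval, ← ENNReal.ofReal_add hκ0.le (by nlinarith)]
    have : κ + (κ * y ^ (κ - 1) - κ) = κ * y ^ (κ - 1) := by ring
    rw [this, ENNReal.ofReal_mul hκ0.le, hxy, ENNReal.ofReal_rpow_of_pos hy0]

/-- relation between conditional p-functions and conditional
e-functions w.r.t. a statistical model `(P_θ)_{θ∈Θ}` and `κ ∈ (0,1)`.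
(a) If `f : Ω × Θ → [0,1]` is a conditional p-function, then
`(ω,θ) ↦ κ · f(ω;θ)^(κ-1)` is a conditional e-function (in `ℝ≥0∞`, `0 ^ (κ-1) = ∞`).
(b) If `f : Ω × Θ → [0,∞]` is a conditional e-function, then
`(ω,θ) ↦ min 1 (1/f(ω;θ))` is a conditional p-function. -/
theorem stmt4 {Ω Θ : Type*} [MeasurableSpace Ω] [MeasurableSpace Θ]
    (P : Kernel Θ Ω) [IsMarkovKernel P]
    (κ : ℝ) (hκ : κ ∈ Set.Ioo (0 : ℝ) 1) :
    (∀ f : Ω × Θ → ℝ≥0∞, Measurable f → (∀ x, f x ≤ 1) →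
      (∀ θ, ∀ ε : ℝ≥0∞, 0 < ε → P θ {ω | f (ω, θ) ≤ ε} ≤ ε) →
      ∀ θ, ∫⁻ ω, ENNReal.ofReal κ * f (ω, θ) ^ (κ - 1) ∂(P θ) ≤ 1) ∧
    (∀ f : Ω × Θ → ℝ≥0∞, Measurable f → (∀ θ, ∫⁻ ω, f (ω, θ) ∂(P θ) ≤ 1) →
      ∀ θ, ∀ ε : ℝ≥0∞, 0 < ε → P θ {ω | min 1 (f (ω, θ))⁻¹ ≤ ε} ≤ ε) := by
  obtain ⟨hκ0, hκ1⟩ := hκ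
  constructor
  · -- part (a)
    intro f hf hle hp θ
    set μ := P θ with hμ
    set F : Ω → ℝ≥0∞ := fun ω => f (ω, θ) with hF_def
    have hF : Measurable F := hf.comp (measurable_id.prodMk measurable_const)
    -- rewrite the integrand via the key pointwise identity
    have step1 : ∫⁻ ω, ENNReal.ofReal κ * F ω ^ (κ - 1) ∂μ
        = ∫⁻ ω, (ENNReal.ofReal κ + ∫⁻ t in Set.Ioc (0 : ℝ) 1,
            (if F ω ≤ ENNReal.ofReal t then ENNReal.ofReal (κ * (1 - κ) * t ^ (κ - 2))
              else 0)) ∂μ :=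
      lintegral_congr fun ω => key_pointwise ⟨hκ0, hκ1⟩ (hle (ω, θ))
    rw [step1, lintegral_add_left measurable_const, lintegral_const, measure_univ, mul_one]
    -- swap the two integrals via Tonelli
    have hmeas_prod : Measurable (fun p : Ω × ℝ =>
        (if F p.1 ≤ ENNReal.ofReal p.2 then ENNReal.ofReal (κ * (1 - κ) * p.2 ^ (κ - 2))
          else 0)) := by
      apply Measurable.ite
      · exact measurableSet_le (hF.comp measurable_fst)
          (ENNReal.measurable_ofReal.comp measurable_snd)
      · exact ENNReal.measurable_ofReal.comp ((meas_rpow (κ - 2)).comp measurable_snd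
          |>.const_mul _)
      · exact measurable_const
    have hswap : ∫⁻ ω, (∫⁻ t in Set.Ioc (0 : ℝ) 1,
          (if F ω ≤ ENNReal.ofReal t then ENNReal.ofReal (κ * (1 - κ) * t ^ (κ - 2))
            else 0)) ∂μ
        = ∫⁻ t in Set.Ioc (0 : ℝ) 1, (∫⁻ ω,
          (if F ω ≤ ENNReal.ofReal t then ENNReal.ofReal (κ * (1 - κ) * t ^ (κ - 2))
            else 0) ∂μ) := by
      exact lintegral_lintegral_swap hmeas_prod.aemeasurable
    rw [hswap]
    -- compute the inner integral and bound via the p-function property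
    have hinner : ∀ t : ℝ, ∫⁻ ω,
        (if F ω ≤ ENNReal.ofReal t then ENNReal.ofReal (κ * (1 - κ) * t ^ (κ - 2)) else 0) ∂μ
        = ENNReal.ofReal (κ * (1 - κ) * t ^ (κ - 2)) * μ {ω | F ω ≤ ENNReal.ofReal t} := by
      intro t
      have : (fun ω => if F ω ≤ ENNReal.ofReal t then
          ENNReal.ofReal (κ * (1 - κ) * t ^ (κ - 2)) else 0)
          = Set.indicator {ω | F ω ≤ ENNReal.ofReal t}
            (fun _ => ENNReal.ofReal (κ * (1 - κ) * t ^ (κ - 2))) := by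
        funext ω
        rw [Set.indicator_apply]
        rfl
      rw [this, lintegral_indicator_const (measurableSet_le hF measurable_const)]
    simp_rw [hinner]
    have hbound : ∫⁻ t in Set.Ioc (0 : ℝ) 1,
        ENNReal.ofReal (κ * (1 - κ) * t ^ (κ - 2)) * μ {ω | F ω ≤ ENNReal.ofReal t}
        ≤ ∫⁻ t in Set.Ioc (0 : ℝ) 1, ENNReal.ofReal (κ * (1 - κ) * t ^ (κ - 1)) := by
      apply setLIntegral_mono
        (ENNReal.measurable_ofReal.comp ((meas_rpow (κ - 1)).const_mul _))
      intro t ht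
      have hμle : μ {ω | F ω ≤ ENNReal.ofReal t} ≤ ENNReal.ofReal t :=
        hp θ (ENNReal.ofReal t) (by simpa [ENNReal.ofReal_pos] using ht.1)
      calc ENNReal.ofReal (κ * (1 - κ) * t ^ (κ - 2)) * μ {ω | F ω ≤ ENNReal.ofReal t}
          ≤ ENNReal.ofReal (κ * (1 - κ) * t ^ (κ - 2)) * ENNReal.ofReal t :=
            mul_le_mul_right hμle _
        _ = ENNReal.ofReal (κ * (1 - κ) * t ^ (κ - 1)) := by
            rw [← ENNReal.ofReal_mul (mul_nonneg (by nlinarith) (Real.rpow_nonneg ht.1.le _))]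
            congr 1
            rw [mul_assoc, ← Real.rpow_add_one ht.1.ne']
            ring_nf
    refine le_trans (add_le_add_right hbound _) ?_
    -- compute the remaining integral
    have hc : 0 < κ * (1 - κ) := by nlinarith
    have hcomp : ∫⁻ t in Set.Ioc (0 : ℝ) 1, ENNReal.ofReal (κ * (1 - κ) * t ^ (κ - 1))
        = ENNReal.ofReal (1 - κ) := by
      have heq : ∀ t : ℝ, ENNReal.ofReal (κ * (1 - κ) * t ^ (κ - 1))
          = ENNReal.ofReal (κ * (1 - κ)) * ENNReal.ofReal (t ^ (κ - 1)) := fun t => by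
        rw [ENNReal.ofReal_mul hc.le]
      simp_rw [heq]
      rw [lintegral_const_mul _ ((meas_rpow _).ennreal_ofReal),
        lint_rpow_Ioc_zero (by linarith)]
      rw [← ENNReal.ofReal_mul hc.le]
      congr 1
      have : κ - 1 + 1 = κ := by ring
      rw [this]
      field_simp
    rw [hcomp, ← ENNReal.ofReal_add hκ0.le (by linarith)]
    simp
  · -- part (b)
    intro f hf hint θ ε hε
    rcases le_or_gt 1 ε with hε1 | hε1
    · calc P θ {ω | min 1 (f (ω, θ))⁻¹ ≤ ε} ≤ P θ Set.univ := measure_mono (Set.subset_univ _)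
        _ = 1 := measure_univ
        _ ≤ ε := hε1
    · have hεne : ε ≠ 0 := hε.ne'
      have hset : {ω | min 1 (f (ω, θ))⁻¹ ≤ ε} = {ω | ε⁻¹ ≤ f (ω, θ)} := by
        ext ω
        simp only [Set.mem_setOf_eq, min_le_iff]
        constructor
        · rintro (h | h)
          · exact absurd h (not_le.mpr hε1)
          · exact ENNReal.inv_le_iff_inv_le.mp h
        · intro h
          exact Or.inr (ENNReal.inv_le_iff_inv_le.mpr h)
      rw [hset]
      have hF : AEMeasurable (fun ω => f (ω, θ)) (P θ) :=
        (hf.comp (measurable_id.prodMk measurable_const)).aemeasurable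
      have hmarkov := mul_meas_ge_le_lintegral₀ hF ε⁻¹
      have h1 : ε⁻¹ * P θ {ω | ε⁻¹ ≤ f (ω, θ)} ≤ 1 := hmarkov.trans (hint θ)
      have hinvne : ε⁻¹ ≠ 0 := by
        simp only [ne_eq, ENNReal.inv_eq_zero]
        exact (hε1.trans ENNReal.one_lt_top).ne
      have hinvnt : ε⁻¹ ≠ ∞ := by
        simp only [ne_eq, ENNReal.inv_eq_top]
        exact hεne
      calc P θ {ω | ε⁻¹ ≤ f (ω, θ)}
          = ε * (ε⁻¹ * P θ {ω | ε⁻¹ ≤ f (ω, θ)}) := by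
            rw [← mul_assoc, ENNReal.mul_inv_cancel hεne (hε1.trans ENNReal.one_lt_top).ne,
              one_mul]
        _ ≤ ε * 1 := mul_le_mul_right h1 _
        _ = ε := mul_one ε
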